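/- With notation as in the block-loop construction: if P ∈ M(n,ℂ) satisfies Ad(L)P ∩ M(n,ℝ) ≠ ∅ for L = U(n₁)×⋯×U(n_k), then for every loop i₀→⋯→i_l the characteristic polynomial det(λI − A_{i₀⋯i_l}(P)) has real coefficients. -/

import Mathlib

open Matrix
open scoped Pointwise

/-- Index type for `ℂ^n = ℂ^{n₁} ⊕ ⋯ ⊕ ℂ^{n_k}`. -/
abbrev SIdx (k : ℕ) (ns : Fin k → ℕ) := (j : Fin k) × Fin (ns j)

variable {k : ℕ} {ns : Fin k → ℕ}

/-- The `(i,j)`-block of a matrix written in block form for the partition `ns`. -/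
def blockOf (ns : Fin k → ℕ) (P : Matrix (SIdx k ns) (SIdx k ns) ℂ) (i j : Fin k) :
    Matrix (Fin (ns i)) (Fin (ns j)) ℂ :=
  fun a b => P ⟨i, a⟩ ⟨j, b⟩

/-- `P̃_{ij}`: equals `P_{ij}` for `i < j` and `(P_{ji})*` for `i > j`. -/
def tildeBlock (ns : Fin k → ℕ) (P : Matrix (SIdx k ns) (SIdx k ns) ℂ) (i j : Fin k) :
    Matrix (Fin (ns i)) (Fin (ns j)) ℂ :=
  if i < j then blockOf ns P i j else (blockOf ns P j i)ᴴ

/-- Embedding of an `(i,j)`-block back into a full `n × n` matrix (all other blocks 0). -/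
def embedBlock (ns : Fin k → ℕ) (i j : Fin k) (M : Matrix (Fin (ns i)) (Fin (ns j)) ℂ) :
    Matrix (SIdx k ns) (SIdx k ns) ℂ :=
  fun a b =>
    if h : a.1 = i ∧ b.1 = j then
      M (Fin.cast (congrArg ns h.1) a.2) (Fin.cast (congrArg ns h.2) b.2)
    else 0

/-- The block-loop matrix `A_{i₀⋯i_l}(P) = P̃_{i₀i₁} P̃_{i₁i₂} ⋯ P̃_{i_{l−1}i_l}`,
computed via the embedded blocks and extracted as the `(i₀, i_l)`-block. -/
noncomputable def loopA (ns : Fin k → ℕ) (P : Matrix (SIdx k ns) (SIdx k ns) ℂ)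
    (l : ℕ) (c : Fin (l+1) → Fin k) :
    Matrix (Fin (ns (c 0))) (Fin (ns (c (Fin.last l)))) ℂ :=
  blockOf ns
    ((List.ofFn (fun t : Fin l =>
        embedBlock ns (c t.castSucc) (c t.succ)
          (tildeBlock ns P (c t.castSucc) (c t.succ)))).prod)
    (c 0) (c (Fin.last l))

/-- The block-diagonal matrix `diag(u₁,…,u_k)`. -/
def bdiag (ns : Fin k → ℕ) (u : (j : Fin k) → Matrix (Fin (ns j)) (Fin (ns j)) ℂ) :
    Matrix (SIdx k ns) (SIdx k ns) ℂ :=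
  fun a b =>
    if h : a.1 = b.1 then u a.1 a.2 (Fin.cast (congrArg ns h.symm) b.2) else 0

lemma bdiag_eq (u : (j : Fin k) → Matrix (Fin (ns j)) (Fin (ns j)) ℂ) :
    bdiag ns u = Matrix.blockDiagonal' u := by
  ext ⟨a, x⟩ ⟨b, y⟩
  rw [Matrix.blockDiagonal'_apply']
  by_cases h : a = b
  · subst h; rfl
  · simp [bdiag, h]

lemma bdiag_mul (u v : (j : Fin k) → Matrix (Fin (ns j)) (Fin (ns j)) ℂ) :
    bdiag ns u * bdiag ns v = bdiag ns (fun j => u j * v j) := by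
  rw [bdiag_eq, bdiag_eq, bdiag_eq, Matrix.blockDiagonal'_mul]

lemma bdiag_one : bdiag ns (fun _ => 1) = 1 := by
  rw [bdiag_eq]; exact Matrix.blockDiagonal'_one

lemma blockOf_bdiag_mul (u : (j : Fin k) → Matrix (Fin (ns j)) (Fin (ns j)) ℂ)
    (X : Matrix (SIdx k ns) (SIdx k ns) ℂ) (i j : Fin k) :
    blockOf ns (bdiag ns u * X) i j = u i * blockOf ns X i j := by
  ext a b
  rw [blockOf, Matrix.mul_apply, Matrix.mul_apply]
  rw [← Finset.univ_sigma_univ, Finset.sum_sigma]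
  rw [Finset.sum_eq_single i]
  · apply Finset.sum_congr rfl
    intro z _
    simp [bdiag, blockOf]
  · intro c _ hc
    apply Finset.sum_eq_zero
    intro z _
    simp [bdiag, hc.symm]
  · intro h; exact absurd (Finset.mem_univ i) h

lemma blockOf_mul_bdiag (v : (j : Fin k) → Matrix (Fin (ns j)) (Fin (ns j)) ℂ)
    (X : Matrix (SIdx k ns) (SIdx k ns) ℂ) (i j : Fin k) :
    blockOf ns (X * bdiag ns v) i j = blockOf ns X i j * v j := by
  ext a b
  rw [blockOf, Matrix.mul_apply, Matrix.mul_apply]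
  rw [← Finset.univ_sigma_univ, Finset.sum_sigma]
  rw [Finset.sum_eq_single j]
  · apply Finset.sum_congr rfl
    intro z _
    simp [bdiag, blockOf]
  · intro c _ hc
    apply Finset.sum_eq_zero
    intro z _
    simp [bdiag, hc]
  · intro h; exact absurd (Finset.mem_univ j) h

lemma bdiag_mul_embed (u : (j : Fin k) → Matrix (Fin (ns j)) (Fin (ns j)) ℂ)
    (i j : Fin k) (M : Matrix (Fin (ns i)) (Fin (ns j)) ℂ) :
    bdiag ns u * embedBlock ns i j M = embedBlock ns i j (u i * M) := by
  ext ⟨i', x⟩ ⟨j', y⟩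
  rw [Matrix.mul_apply, ← Finset.univ_sigma_univ, Finset.sum_sigma]
  rw [Finset.sum_eq_single i']
  · by_cases h1 : i' = i
    · subst h1
      by_cases h2 : j' = j
      · subst h2
        simp [bdiag, embedBlock, Matrix.mul_apply]
      · simp [embedBlock, h2]
    · simp only [embedBlock]
      rw [dif_neg (fun h => h1 h.1)]
      apply Finset.sum_eq_zero
      intro z _
      rw [dif_neg (fun h => h1 h.1), mul_zero]
  · intro c _ hc
    apply Finset.sum_eq_zero
    intro z _
    simp [bdiag, hc.symm]
  · intro h; exact absurd (Finset.mem_univ i') h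

lemma embed_mul_bdiag (v : (j : Fin k) → Matrix (Fin (ns j)) (Fin (ns j)) ℂ)
    (i j : Fin k) (M : Matrix (Fin (ns i)) (Fin (ns j)) ℂ) :
    embedBlock ns i j M * bdiag ns v = embedBlock ns i j (M * v j) := by
  ext ⟨i', x⟩ ⟨j', y⟩
  rw [Matrix.mul_apply, ← Finset.univ_sigma_univ, Finset.sum_sigma]
  rw [Finset.sum_eq_single j']
  · by_cases h2 : j' = j
    · subst h2
      by_cases h1 : i' = i
      · subst h1
        simp [bdiag, embedBlock, Matrix.mul_apply]
      · simp only [embedBlock]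
        rw [dif_neg (fun h => h1 h.1)]
        apply Finset.sum_eq_zero
        intro z _
        rw [dif_neg (fun h => h1 h.1), zero_mul]
    · simp only [embedBlock]
      rw [dif_neg (fun h => h2 h.2)]
      apply Finset.sum_eq_zero
      intro z _
      rw [dif_neg (fun h => h2 h.2), zero_mul]
  · intro c _ hc
    apply Finset.sum_eq_zero
    intro z _
    simp [bdiag, hc]
  · intro h; exact absurd (Finset.mem_univ j') h

lemma tildeBlock_conj (u : (j : Fin k) → Matrix (Fin (ns j)) (Fin (ns j)) ℂ)
    (P : Matrix (SIdx k ns) (SIdx k ns) ℂ)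
    (hinv : (bdiag ns u)⁻¹ = bdiag ns (fun j => (u j)ᴴ)) (i j : Fin k) :
    tildeBlock ns (bdiag ns u * P * (bdiag ns u)⁻¹) i j
      = u i * tildeBlock ns P i j * (u j)ᴴ := by
  have hb : ∀ i' j', blockOf ns (bdiag ns u * P * (bdiag ns u)⁻¹) i' j'
      = u i' * blockOf ns P i' j' * (u j')ᴴ := by
    intro i' j'
    rw [hinv, blockOf_mul_bdiag, blockOf_bdiag_mul]
  unfold tildeBlock
  by_cases h : i < j
  · rw [if_pos h, if_pos h, hb]
  · rw [if_neg h, if_neg h, hb]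
    simp only [Matrix.conjTranspose_mul, Matrix.conjTranspose_conjTranspose, mul_assoc]
    exact (Matrix.mul_assoc _ _ _).symm

lemma tildeBlock_real (Q : Matrix (SIdx k ns) (SIdx k ns) ℂ)
    (hQ : ∀ a b, (Q a b).im = 0) (i j : Fin k) :
    ∀ a b, ((tildeBlock ns Q i j) a b).im = 0 := by
  intro a b
  unfold tildeBlock
  by_cases h : i < j
  · rw [if_pos h]; exact hQ _ _
  · rw [if_neg h]
    simp only [Matrix.conjTranspose_apply, blockOf]
    simp [Complex.star_def, hQ]

lemma embed_real (i j : Fin k) (M : Matrix (Fin (ns i)) (Fin (ns j)) ℂ)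
    (hM : ∀ a b, (M a b).im = 0) :
    ∀ a b, ((embedBlock ns i j M) a b).im = 0 := by
  intro a b
  unfold embedBlock
  split
  · exact hM _ _
  · simp

lemma prod_conj {n : Type*} [Fintype n] [DecidableEq n]
    (U V : Matrix n n ℂ) (hUV : U * V = 1) (hVU : V * U = 1) :
    ∀ L : List (Matrix n n ℂ), (L.map fun X => U * X * V).prod = U * L.prod * V
  | [] => by rw [List.map_nil, List.prod_nil, mul_one, hUV]
  | X :: L => by
      rw [List.map_cons, List.prod_cons, List.prod_cons, prod_conj U V hUV hVU L]
      simp only [mul_assoc]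
      rw [← mul_assoc V U, hVU, one_mul]

lemma prod_real {n : Type*} [Fintype n] [DecidableEq n] :
    ∀ L : List (Matrix n n ℂ), (∀ X ∈ L, ∀ a b, (X a b).im = 0) →
      ∀ a b, (L.prod a b).im = 0
  | [] => by
      intro _ a b
      rw [List.prod_nil, Matrix.one_apply]
      split <;> simp
  | X :: L => by
      intro h a b
      rw [List.prod_cons, Matrix.mul_apply, Complex.im_sum]
      apply Finset.sum_eq_zero
      intro z _
      rw [Complex.mul_im, h X (List.mem_cons_self (a := X) (l := L)) a z,
        prod_real L (fun Y hY => h Y (List.mem_cons_of_mem _ hY)) z b]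
      ring

lemma charpoly_conj {n : Type*} [Fintype n] [DecidableEq n]
    (u A v : Matrix n n ℂ) (huv : u * v = 1) (hvu : v * u = 1) :
    (u * A * v).charpoly = A.charpoly := by
  have hmap : ∀ M N : Matrix n n ℂ, (M * N).map (Polynomial.C (R := ℂ))
      = M.map Polynomial.C * N.map Polynomial.C := fun M N =>
    Matrix.map_mul (f := (Polynomial.C : ℂ →+* Polynomial ℂ))
  have h1 : charmatrix (u * A * v)
      = u.map Polynomial.C * charmatrix A * v.map Polynomial.C := by
    rw [charmatrix]
    simp only [RingHom.mapMatrix_apply]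
    rw [charmatrix]
    simp only [RingHom.mapMatrix_apply, Matrix.mul_sub, Matrix.sub_mul]
    rw [hmap, hmap]
    congr 1
    symm
    rw [← (Matrix.scalar_commute (Polynomial.X : Polynomial ℂ)
      (fun r => Commute.all _ _) (u.map Polynomial.C)).eq]
    rw [mul_assoc, ← hmap, huv]
    simp
  rw [Matrix.charpoly, h1, Matrix.det_mul, Matrix.det_mul, Matrix.charpoly]
  rw [mul_comm, ← mul_assoc, ← Matrix.det_mul, ← hmap, hvu]
  simp

lemma charpoly_coeff_real {n : Type*} [Fintype n] [DecidableEq n]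
    (A : Matrix n n ℂ) (h : ∀ a b, (A a b).im = 0) (m : ℕ) :
    ((A.charpoly).coeff m).im = 0 := by
  have hA : A = (Matrix.of fun a b => (A a b).re).map (Complex.ofRealHom : ℝ →+* ℂ) := by
    ext a b
    apply Complex.ext
    · simp [Matrix.map_apply]
    · simp [Matrix.map_apply, h]
  rw [hA, Matrix.charpoly_map, Polynomial.coeff_map]
  simp

lemma aux_final (ns : Fin k → ℕ) (u : (j : Fin k) → Matrix (Fin (ns j)) (Fin (ns j)) ℂ)
    (hu : ∀ j, u j ∈ Matrix.unitaryGroup (Fin (ns j)) ℂ)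
    (i0 il : Fin k) (hloop : il = i0)
    (A B : Matrix (Fin (ns i0)) (Fin (ns il)) ℂ)
    (key : B = u i0 * A * (u il)ᴴ)
    (hre : ∀ a b, (B a b).im = 0) (m : ℕ) :
    (((A.submatrix id (Fin.cast (congrArg ns hloop.symm))).charpoly).coeff m).im = 0 := by
  subst hloop
  have hcast : (Fin.cast (congrArg ns (rfl : il = il).symm) : Fin (ns il) → Fin (ns il)) = id := by
    funext x; rfl
  rw [hcast, Matrix.submatrix_id_id]
  have h1 : u il * (u il)ᴴ = 1 := by
    have := Matrix.mem_unitaryGroup_iff.mp (hu il)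
    rwa [Matrix.star_eq_conjTranspose] at this
  have h2 : (u il)ᴴ * u il = 1 := by
    have := Matrix.mem_unitaryGroup_iff'.mp (hu il)
    rwa [Matrix.star_eq_conjTranspose] at this
  have hchar : A.charpoly = B.charpoly := by
    rw [key, charpoly_conj _ _ _ h1 h2]
  rw [hchar]
  exact charpoly_coeff_real B hre m

/-- Lemma 5.2, contrapositive form: if `Ad(L)P` contains a real matrix,
where `L = U(n₁)×⋯×U(n_k)` is block-diagonal, then for every loop `i₀→⋯→i_l`
(`i₀ = i_l`, consecutive indices distinct, `l ≥ 2`) the characteristic polynomial of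
`A_{i₀⋯i_l}(P)` has real coefficients. -/
theorem loopA_charpoly_real_of_real_in_orbit (k : ℕ) (ns : Fin k → ℕ)
    (P : Matrix (SIdx k ns) (SIdx k ns) ℂ)
    (hreal : ∃ u : (j : Fin k) → Matrix (Fin (ns j)) (Fin (ns j)) ℂ,
      (∀ j, u j ∈ Matrix.unitaryGroup (Fin (ns j)) ℂ) ∧
      ∀ a b, ((bdiag ns u * P * (bdiag ns u)⁻¹) a b).im = 0) :
    ∀ (l : ℕ), 2 ≤ l → ∀ (c : Fin (l+1) → Fin k) (hloop : c (Fin.last l) = c 0),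
      (∀ t : Fin l, c t.castSucc ≠ c t.succ) →
      ∀ m : ℕ,
        ((Matrix.charpoly ((loopA ns P l c).submatrix
          id (Fin.cast (congrArg ns hloop.symm)))).coeff m).im = 0 := by
  obtain ⟨u, hu, hQ⟩ := hreal
  have hinv : (bdiag ns u)⁻¹ = bdiag ns (fun j => (u j)ᴴ) := by
    apply Matrix.inv_eq_right_inv
    rw [bdiag_mul]
    have : (fun j => u j * (u j)ᴴ) = (fun _ : Fin k => (1 : Matrix _ _ ℂ)) := by
      funext j
      have := Matrix.mem_unitaryGroup_iff.mp (hu j)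
      rwa [Matrix.star_eq_conjTranspose] at this
    rw [this, bdiag_one]
  have hUV : bdiag ns u * (bdiag ns u)⁻¹ = 1 := by
    rw [hinv, bdiag_mul]
    have : (fun j => u j * (u j)ᴴ) = (fun _ : Fin k => (1 : Matrix _ _ ℂ)) := by
      funext j
      have := Matrix.mem_unitaryGroup_iff.mp (hu j)
      rwa [Matrix.star_eq_conjTranspose] at this
    rw [this, bdiag_one]
  have hVU : (bdiag ns u)⁻¹ * bdiag ns u = 1 := by
    rw [hinv, bdiag_mul]
    have : (fun j => (u j)ᴴ * u j) = (fun _ : Fin k => (1 : Matrix _ _ ℂ)) := by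
      funext j
      have := Matrix.mem_unitaryGroup_iff'.mp (hu j)
      rwa [Matrix.star_eq_conjTranspose] at this
    rw [this, bdiag_one]
  intro l _ c hloop _ m
  set Q := bdiag ns u * P * (bdiag ns u)⁻¹ with hQdef
  -- each embedded tilde-block of Q is the conjugate of that of P
  have hembed : ∀ i j : Fin k,
      embedBlock ns i j (tildeBlock ns Q i j)
        = bdiag ns u * embedBlock ns i j (tildeBlock ns P i j) * (bdiag ns u)⁻¹ := by
    intro i j
    rw [hQdef, tildeBlock_conj u P hinv i j, hinv, bdiag_mul_embed, embed_mul_bdiag]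
  have key : loopA ns Q l c = u (c 0) * loopA ns P l c * (u (c (Fin.last l)))ᴴ := by
    unfold loopA
    have hList : (List.ofFn (fun t : Fin l =>
        embedBlock ns (c t.castSucc) (c t.succ) (tildeBlock ns Q (c t.castSucc) (c t.succ))))
        = (List.ofFn (fun t : Fin l =>
            embedBlock ns (c t.castSucc) (c t.succ)
              (tildeBlock ns P (c t.castSucc) (c t.succ)))).map
            (fun X => bdiag ns u * X * (bdiag ns u)⁻¹) := by
      rw [List.map_ofFn]
      congr 1
      funext t
      exact hembed _ _
    rw [hList, prod_conj _ _ hUV hVU, hinv, blockOf_mul_bdiag, blockOf_bdiag_mul]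
  have hQreal : ∀ a b, ((loopA ns Q l c) a b).im = 0 := by
    intro a b
    unfold loopA blockOf
    apply prod_real
    intro X hX
    rw [List.mem_ofFn] at hX
    obtain ⟨t, rfl⟩ := hX
    exact embed_real _ _ _ (tildeBlock_real Q hQ _ _)
  exact aux_final ns u hu (c 0) (c (Fin.last l)) hloop
    (loopA ns P l c) (loopA ns Q l c) key hQreal m
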